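/- Let e ⊆ V be a hyperedge with edge-dependent vertex weights γ_e : V → ℝ_{≥0} (positive on e, zero off e), and let γ_e(S) = Σ_{v∈S} γ_e(v). If g_e : [0, γ_e(e)] → ℝ_{≥0} is concave, symmetric about γ_e(e)/2, and satisfies g_e(0) = 0, and h_e(κ(e)) > 0, then the function w_e(S) = h_e(κ(e)) · g_e(γ_e(S)) on 2^e is non-negative, submodular, symmetric (w_e(S) = w_e(e\S)), and satisfies w_e(∅) = 0. -/

import Mathlib

open scoped Classical

lemma concave_spread {g : ℝ → ℝ} {D : Set ℝ} (hconc : ConcaveOn ℝ D g)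
    {s u a b : ℝ} (hs : s ∈ D) (hu : u ∈ D) (hsa : s ≤ a) (hau : a ≤ u)
    (hab : a + b = s + u) : g s + g u ≤ g a + g b := by
  rcases eq_or_lt_of_le (hsa.trans hau) with heq | hlt
  · have ha : a = s := le_antisymm (heq ▸ hau) hsa
    have hb : b = u := by linarith
    rw [ha, hb]
  · set t := (u - a) / (u - s) with ht
    have hden : 0 < u - s := by linarith
    have ht0 : 0 ≤ t := div_nonneg (by linarith) hden.le
    have ht1 : t ≤ 1 := (div_le_one hden).2 (by linarith)
    have ha' : a = t • s + (1 - t) • u := by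
      simp only [smul_eq_mul]
      have key : t * (u - s) = u - a := div_mul_cancel₀ _ hden.ne'
      linear_combination key
    have hb' : b = (1 - t) • s + t • u := by
      simp only [smul_eq_mul]
      have key : t * (u - s) = u - a := div_mul_cancel₀ _ hden.ne'
      linear_combination hab - key
    have h1 := hconc.2 hs hu ht0 (by linarith : (0:ℝ) ≤ 1 - t) (by ring)
    have h2 := hconc.2 hs hu (by linarith : (0:ℝ) ≤ 1 - t) ht0 (by ring)
    rw [← ha'] at h1
    rw [← hb'] at h2
    simp only [smul_eq_mul] at h1 h2
    nlinarith

/-- For EDVW `γ` on a hyperedge `e`, a concave symmetric `g` with `g 0 = 0` that is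
non-negative on `[0, γ(e)]`, and a positive factor `c = h_e(κ(e))`, the splitting function
`w(S) = c · g(γ(S))` is non-negative, submodular, symmetric and vanishes at `∅`. -/
theorem stmt_4 {V : Type*} [Fintype V] [DecidableEq V] (e : Finset V) (γ : V → ℝ)
    (hpos : ∀ v ∈ e, 0 < γ v) (hzero : ∀ v ∉ e, γ v = 0)
    (g : ℝ → ℝ)
    (hconc : ConcaveOn ℝ (Set.Icc 0 (∑ v ∈ e, γ v)) g)
    (hgnn : ∀ x ∈ Set.Icc 0 (∑ v ∈ e, γ v), 0 ≤ g x)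
    (hgsym : ∀ x ∈ Set.Icc 0 (∑ v ∈ e, γ v), g x = g ((∑ v ∈ e, γ v) - x))
    (hg0 : g 0 = 0)
    (c : ℝ) (hc : 0 < c) :
    let w : Finset V → ℝ := fun S => c * g (∑ v ∈ S, γ v)
    (∀ S ⊆ e, 0 ≤ w S) ∧
    (∀ S₁ ⊆ e, ∀ S₂ ⊆ e, w (S₁ ∪ S₂) + w (S₁ ∩ S₂) ≤ w S₁ + w S₂) ∧
    (∀ S ⊆ e, w S = w (e \ S)) ∧
    w ∅ = 0 := by
  intro w
  have hγnn : ∀ v, 0 ≤ γ v := by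
    intro v
    by_cases hv : v ∈ e
    · exact (hpos v hv).le
    · exact (hzero v hv).ge
  have hmem : ∀ S ⊆ e, (∑ v ∈ S, γ v) ∈ Set.Icc 0 (∑ v ∈ e, γ v) := by
    intro S hS
    refine ⟨Finset.sum_nonneg fun v _ => hγnn v, ?_⟩
    exact Finset.sum_le_sum_of_subset_of_nonneg hS fun v _ _ => hγnn v
  have hmono : ∀ S T : Finset V, S ⊆ T → (∑ v ∈ S, γ v) ≤ ∑ v ∈ T, γ v := by
    intro S T hST
    exact Finset.sum_le_sum_of_subset_of_nonneg hST fun v _ _ => hγnn v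
  refine ⟨?_, ?_, ?_, ?_⟩
  · intro S hS
    exact mul_nonneg hc.le (hgnn _ (hmem S hS))
  · intro S₁ h₁ S₂ h₂
    have key : g (∑ v ∈ S₁ ∩ S₂, γ v) + g (∑ v ∈ S₁ ∪ S₂, γ v)
        ≤ g (∑ v ∈ S₁, γ v) + g (∑ v ∈ S₂, γ v) := by
      refine concave_spread hconc (hmem _ (le_trans (Finset.inter_subset_left) h₁))
        (hmem _ (Finset.union_subset h₁ h₂)) (hmono _ _ Finset.inter_subset_left)
        (hmono _ _ Finset.subset_union_left) ?_
      have := Finset.sum_union_inter (s₁ := S₁) (s₂ := S₂) (f := γ)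
      linarith
    simp only [w]
    nlinarith
  · intro S hS
    have hsd : (∑ v ∈ e \ S, γ v) = (∑ v ∈ e, γ v) - ∑ v ∈ S, γ v := by
      have := Finset.sum_sdiff (f := γ) hS
      linarith
    simp only [w, hsd]
    rw [← hgsym _ (hmem S hS)]
  · simp [w, hg0]
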